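/- Let (X_j)_{j∈ℤ^d} be a stationary m-dependent random field, (B_n) a sequence of finite subsets of ℤ^d regularly growing to infinity, and g^{(1)}, g^{(2)}, g_n^{(1)}, g_n^{(2)} : ℝ → ℝ measurable functions such that E[g_n^{(k)}(X_0)] = 0 for all n and k = 1,2, E[g^{(k)}(X_0)²] and E[g_n^{(k)}(X_0)²] are finite, and E[g_n^{(1)}(X_0) g_n^{(2)}(X_k)] → E[g^{(1)}(X_0) g^{(2)}(X_k)] =: σ_k for each k ∈ ℤ^d. Then Cov( |B_n|^{−1/2} Σ_{j∈B_n} g_n^{(1)}(X_j), |B_n|^{−1/2} Σ_{k∈B_n} g_n^{(2)}(X_k) ) → Σ_{t∈ℤ^d, ‖t‖_∞ ≤ m} σ_t as n → ∞. -/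

import Mathlib

open MeasureTheory ProbabilityTheory Filter

/-- Boundary of a set of lattice points: points outside at `ℓ^∞`-distance 1. -/
def latticeBoundary {d : ℕ} (A : Set (Fin d → ℤ)) : Set (Fin d → ℤ) :=
  {j | j ∉ A ∧ ∃ x ∈ A, ∀ i, |j i - x i| ≤ 1}


lemma shiftInt {d : ℕ} {Ω : Type*} [MeasurableSpace Ω] (P : Measure Ω)
    (X : (Fin d → ℤ) → Ω → ℝ) (hmeas : ∀ j, Measurable (X j))
    (hstat : ∀ t : Fin d → ℤ,
      Measure.map (fun ω => fun j => X (j + t) ω) P =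
        Measure.map (fun ω => fun j => X j ω) P)
    (t : Fin d → ℤ) {F : ((Fin d → ℤ) → ℝ) → ℝ} (hF : Measurable F) :
    ∫ ω, F (fun j => X (j + t) ω) ∂P = ∫ ω, F (fun j => X j ω) ∂P := by
  have h1 : Measurable (fun ω => fun j : Fin d → ℤ => X (j + t) ω) :=
    measurable_pi_lambda _ (fun j => hmeas _)
  have h2 : Measurable (fun ω => fun j : Fin d → ℤ => X j ω) :=
    measurable_pi_lambda _ (fun j => hmeas _)
  rw [← integral_map h1.aemeasurable hF.aestronglyMeasurable,
    ← integral_map h2.aemeasurable hF.aestronglyMeasurable, hstat t]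

lemma mapEq {d : ℕ} {Ω : Type*} [MeasurableSpace Ω] (P : Measure Ω)
    (X : (Fin d → ℤ) → Ω → ℝ) (hmeas : ∀ j, Measurable (X j))
    (hstat : ∀ t : Fin d → ℤ,
      Measure.map (fun ω => fun j => X (j + t) ω) P =
        Measure.map (fun ω => fun j => X j ω) P)
    (t : Fin d → ℤ) : Measure.map (X t) P = Measure.map (X 0) P := by
  have h1 : Measurable (fun ω => fun j : Fin d → ℤ => X (j + t) ω) :=
    measurable_pi_lambda _ (fun j => hmeas _)
  have h2 : Measurable (fun ω => fun j : Fin d → ℤ => X j ω) :=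
    measurable_pi_lambda _ (fun j => hmeas _)
  have := congrArg (Measure.map (fun y : (Fin d → ℤ) → ℝ => y 0)) (hstat t)
  rw [Measure.map_map (measurable_pi_apply 0) h1,
    Measure.map_map (measurable_pi_apply 0) h2] at this
  have e1 : ((fun y : (Fin d → ℤ) → ℝ => y 0) ∘ fun ω j => X (j + t) ω) = X t := by
    funext ω; simp
  have e2 : ((fun y : (Fin d → ℤ) → ℝ => y 0) ∘ fun ω j => X j ω) = X 0 := by
    funext ω; simp
  rwa [e1, e2] at this

lemma covShift {d : ℕ} {Ω : Type*} [MeasurableSpace Ω] (P : Measure Ω)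
    (X : (Fin d → ℤ) → Ω → ℝ) (hmeas : ∀ j, Measurable (X j))
    (hstat : ∀ t : Fin d → ℤ,
      Measure.map (fun ω => fun j => X (j + t) ω) P =
        Measure.map (fun ω => fun j => X j ω) P)
    {f g : ℝ → ℝ} (hf : Measurable f) (hg : Measurable g) (j k : Fin d → ℤ) :
    ∫ ω, f (X j ω) * g (X k ω) ∂P = ∫ ω, f (X 0 ω) * g (X (k - j) ω) ∂P := by
  have hF : Measurable (fun y : (Fin d → ℤ) → ℝ => f (y 0) * g (y (k - j))) :=
    (hf.comp (measurable_pi_apply 0)).mul (hg.comp (measurable_pi_apply (k - j)))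
  have := shiftInt P X hmeas hstat j hF
  simpa using this

lemma meanShift {d : ℕ} {Ω : Type*} [MeasurableSpace Ω] (P : Measure Ω)
    (X : (Fin d → ℤ) → Ω → ℝ) (hmeas : ∀ j, Measurable (X j))
    (hstat : ∀ t : Fin d → ℤ,
      Measure.map (fun ω => fun j => X (j + t) ω) P =
        Measure.map (fun ω => fun j => X j ω) P)
    {f : ℝ → ℝ} (hf : Measurable f) (j : Fin d → ℤ) :
    ∫ ω, f (X j ω) ∂P = ∫ ω, f (X 0 ω) ∂P := by
  have hF : Measurable (fun y : (Fin d → ℤ) → ℝ => f (y 0)) :=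
    hf.comp (measurable_pi_apply 0)
  have := shiftInt P X hmeas hstat j hF
  simpa using this

lemma memL2shift {d : ℕ} {Ω : Type*} [MeasurableSpace Ω] (P : Measure Ω)
    (X : (Fin d → ℤ) → Ω → ℝ) (hmeas : ∀ j, Measurable (X j))
    (hstat : ∀ t : Fin d → ℤ,
      Measure.map (fun ω => fun j => X (j + t) ω) P =
        Measure.map (fun ω => fun j => X j ω) P)
    {f : ℝ → ℝ} (hf : Measurable f) (j : Fin d → ℤ)
    (h0 : MemLp (fun ω => f (X 0 ω)) 2 P) :
    MemLp (fun ω => f (X j ω)) 2 P := by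
  have h0' : MemLp f 2 (Measure.map (X 0) P) :=
    (memLp_map_measure_iff hf.aestronglyMeasurable (hmeas 0).aemeasurable).2 h0
  rw [← mapEq P X hmeas hstat j] at h0'
  exact (memLp_map_measure_iff hf.aestronglyMeasurable (hmeas j).aemeasurable).1 h0'

lemma integMul {Ω : Type*} [MeasurableSpace Ω] {P : Measure Ω} [IsProbabilityMeasure P]
    {F G : Ω → ℝ} (hF : MemLp F 2 P) (hG : MemLp G 2 P) :
    Integrable (fun ω => F ω * G ω) P := by
  have h := hF.smul (φ := G) hG (r := 1)
  rw [memLp_one_iff_integrable] at h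
  have : G • F = fun ω => F ω * G ω := by funext ω; simp [mul_comm]
  rwa [this] at h

lemma indepPair {d : ℕ} {Ω : Type*} [MeasurableSpace Ω] {P : Measure Ω}
    {m : ℕ} {X : (Fin d → ℤ) → Ω → ℝ}
    (hmdep : ∀ S T : Finset (Fin d → ℤ),
      (∀ s ∈ S, ∀ t ∈ T, (m : ℝ) < dist s t) →
      IndepFun (fun ω => fun s : S => X s ω) (fun ω => fun t : T => X t ω) P)
    {f g : ℝ → ℝ} (hf : Measurable f) (hg : Measurable g)
    {j k : Fin d → ℤ} (hd : (m : ℝ) < dist j k) :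
    IndepFun (fun ω => f (X j ω)) (fun ω => g (X k ω)) P := by
  have h := hmdep {j} {k} (by
    intro s hs t ht
    simp only [Finset.mem_singleton] at hs ht
    subst hs; subst ht; exact hd)
  exact h.comp (φ := fun v : ({j} : Finset (Fin d → ℤ)) → ℝ =>
      f (v ⟨j, Finset.mem_singleton_self j⟩))
    (ψ := fun v : ({k} : Finset (Fin d → ℤ)) → ℝ =>
      g (v ⟨k, Finset.mem_singleton_self k⟩))
    (hf.comp (measurable_pi_apply _)) (hg.comp (measurable_pi_apply _))

lemma distGt {d : ℕ} {m : ℕ} {j k : Fin d → ℤ}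
    (h : k - j ∉ Finset.Icc (fun _ => -(m : ℤ)) (fun _ => (m : ℤ))) :
    (m : ℝ) < dist j k := by
  have h' : ¬((∀ i, -(m:ℤ) ≤ k i - j i) ∧ ∀ i, k i - j i ≤ m) := by
    simpa [Finset.mem_Icc, Pi.le_def, sub_eq_add_neg] using h
  have : ∃ i : Fin d, (m : ℤ) < |k i - j i| := by
    rcases not_and_or.mp h' with h1 | h1 <;> push_neg at h1 <;> obtain ⟨i, hi⟩ := h1
    · exact ⟨i, lt_abs.mpr (Or.inr (by omega))⟩
    · exact ⟨i, lt_abs.mpr (Or.inl hi)⟩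
  obtain ⟨i, hi⟩ := this
  have h1 : (m : ℝ) < dist (j i) (k i) := by
    rw [Int.dist_eq]
    calc (m : ℝ) < ((|k i - j i| : ℤ) : ℝ) := by exact_mod_cast hi
    _ = |((j i : ℝ)) - (k i : ℝ)| := by push_cast [Int.cast_abs]; rw [abs_sub_comm]
  exact h1.trans_le (dist_le_pi_dist j k i)



lemma boundaryFinite {d : ℕ} (A : Finset (Fin d → ℤ)) :
    (latticeBoundary (↑A : Set (Fin d → ℤ))).Finite := by
  apply Set.Finite.subset (A.biUnion fun x => Finset.Icc (x - 1) (x + 1)).finite_toSet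
  rintro j ⟨-, x, hx, hb⟩
  simp only [Finset.coe_biUnion, Set.mem_iUnion, Finset.mem_coe, Finset.mem_Icc]
  refine ⟨x, hx, ?_, ?_⟩ <;> intro i <;> have := hb i <;> rw [abs_le] at this <;>
    simp only [Pi.sub_apply, Pi.add_apply, Pi.one_apply] <;> omega

lemma badSubset {d m : ℕ} (A : Finset (Fin d → ℤ)) (t : Fin d → ℤ)
    (ht : ∀ i, |t i| ≤ (m : ℤ)) {j : Fin d → ℤ} (hj : j ∈ A) (hjt : j + t ∉ A) :
    ∃ b ∈ latticeBoundary (↑A : Set (Fin d → ℤ)), ∀ i, |j i - b i| ≤ (m : ℤ) := by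
  set p : ℕ → (Fin d → ℤ) := fun n i => j i + max (-(n : ℤ)) (min (n : ℤ) (t i)) with hp
  have hp0 : p 0 = j := by funext i; simp [hp]
  have hpm : p m = j + t := by
    funext i
    have := ht i
    simp only [hp, Pi.add_apply]
    rw [abs_le] at this
    omega
  have hex : ∃ n, p n ∉ (↑A : Set (Fin d → ℤ)) := ⟨m, by rwa [hpm]⟩
  classical
  set n0 := Nat.find hex with hn0def
  have hn0 : p n0 ∉ A := Nat.find_spec hex
  have hn0pos : 1 ≤ n0 := by
    rcases Nat.eq_zero_or_pos n0 with h | h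
    · exfalso; apply hn0; rw [h, hp0]; exact hj
    · exact h
  have hn0le : n0 ≤ m := Nat.find_min' hex (by rwa [hpm])
  have hprev : p (n0 - 1) ∈ A := by
    by_contra hc
    exact absurd (Nat.find_min' hex hc) (by omega)
  refine ⟨p n0, ⟨hn0, p (n0 - 1), hprev, fun i => ?_⟩, fun i => ?_⟩
  · have hcast : ((n0 - 1 : ℕ) : ℤ) = (n0 : ℤ) - 1 := by
      omega
    simp only [hp, hcast]
    have h1 : (1 : ℤ) ≤ (n0 : ℤ) := by exact_mod_cast hn0pos
    rw [abs_le]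
    omega
  · have h2 : (n0 : ℤ) ≤ (m : ℤ) := by exact_mod_cast hn0le
    simp only [hp]
    rw [abs_le]
    omega

lemma badCard {d : ℕ} (m : ℕ) (A : Finset (Fin d → ℤ)) (t : Fin d → ℤ)
    (ht : ∀ i, |t i| ≤ (m : ℤ)) :
    (A.filter (fun j => j + t ∉ A)).card ≤
      (2 * m + 1) ^ d * (latticeBoundary (↑A : Set (Fin d → ℤ))).ncard := by
  classical
  have hfin := boundaryFinite A
  set F := hfin.toFinset with hF
  have hsub : A.filter (fun j => j + t ∉ A) ⊆
      F.biUnion (fun b => Finset.Icc (b - fun _ => (m : ℤ)) (b + fun _ => (m : ℤ))) := by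
    intro j hj
    rw [Finset.mem_filter] at hj
    obtain ⟨b, hb, hbd⟩ := badSubset A t ht hj.1 hj.2
    rw [Finset.mem_biUnion]
    refine ⟨b, hfin.mem_toFinset.mpr hb, ?_⟩
    rw [Finset.mem_Icc]
    constructor <;> intro i <;> have := hbd i <;> rw [abs_le] at this <;>
      simp only [Pi.sub_apply, Pi.add_apply] <;> omega
  calc (A.filter (fun j => j + t ∉ A)).card
      ≤ (F.biUnion (fun b => Finset.Icc (b - fun _ => (m : ℤ)) (b + fun _ => (m : ℤ)))).card :=
        Finset.card_le_card hsub
    _ ≤ ∑ b ∈ F, (Finset.Icc (b - fun _ => (m : ℤ)) (b + fun _ => (m : ℤ))).card :=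
        Finset.card_biUnion_le
    _ = ∑ b ∈ F, (2 * m + 1) ^ d := by
        apply Finset.sum_congr rfl
        intro b _
        rw [Pi.card_Icc]
        simp only [Pi.sub_apply, Pi.add_apply]
        have : ∀ i : Fin d, (Finset.Icc (b i - (m:ℤ)) (b i + (m:ℤ))).card = 2 * m + 1 := by
          intro i
          rw [Int.card_Icc]
          omega
        simp [this]
    _ = F.card * (2 * m + 1) ^ d := by rw [Finset.sum_const, smul_eq_mul]
    _ = (2 * m + 1) ^ d * (latticeBoundary (↑A : Set (Fin d → ℤ))).ncard := by
        rw [Set.ncard_eq_toFinset_card _ hfin, mul_comm]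

lemma ratioTendsto {d : ℕ} (m : ℕ) (B : ℕ → Finset (Fin d → ℤ))
    (hBcard : Tendsto (fun n => (B n).card) atTop atTop)
    (hBreg : Tendsto (fun n =>
        ((latticeBoundary (↑(B n) : Set (Fin d → ℤ))).ncard : ℝ) / ((B n).card : ℝ))
      atTop (nhds 0))
    (t : Fin d → ℤ) (ht : ∀ i, |t i| ≤ (m : ℤ)) :
    Tendsto (fun n => (((B n).filter (fun j => j + t ∈ B n)).card : ℝ) / ((B n).card : ℝ))
      atTop (nhds 1) := by
  classical
  set C : ℝ := (((2 * m + 1) ^ d : ℕ) : ℝ) with hC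
  set bad : ℕ → ℕ := fun n => ((B n).filter (fun j => j + t ∉ B n)).card with hbad
  have hsplit : ∀ n, ((B n).filter (fun j => j + t ∈ B n)).card + bad n = (B n).card := by
    intro n
    exact Finset.card_filter_add_card_filter_not (fun j => j + t ∈ B n)
  have hbad0 : Tendsto (fun n => (bad n : ℝ) / ((B n).card : ℝ)) atTop (nhds 0) := by
    have hb : ∀ n, (bad n : ℝ) / ((B n).card : ℝ) ≤
        C * (((latticeBoundary (↑(B n) : Set (Fin d → ℤ))).ncard : ℝ) / ((B n).card : ℝ)) := by
      intro n
      rcases Nat.eq_zero_or_pos (B n).card with h | h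
      · have hb0 : bad n = 0 := by have := hsplit n; omega
        simp [hb0, h]
      · rw [← mul_div_assoc]
        apply div_le_div_of_nonneg_right ?_ (Nat.cast_nonneg _)
        have := badCard m (B n) t ht
        calc (bad n : ℝ) ≤ (((2 * m + 1) ^ d * (latticeBoundary (↑(B n) : Set (Fin d → ℤ))).ncard : ℕ) : ℝ) := by
              exact_mod_cast this
          _ = C * ((latticeBoundary (↑(B n) : Set (Fin d → ℤ))).ncard : ℝ) := by push_cast [hC]; ring
    have hlim : Tendsto (fun n => C * (((latticeBoundary (↑(B n) : Set (Fin d → ℤ))).ncard : ℝ)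
        / ((B n).card : ℝ))) atTop (nhds 0) := by
      simpa using hBreg.const_mul C
    exact squeeze_zero (fun n => by positivity) hb hlim
  have hev : ∀ᶠ n in atTop, 1 - (bad n : ℝ) / ((B n).card : ℝ) =
      (((B n).filter (fun j => j + t ∈ B n)).card : ℝ) / ((B n).card : ℝ) := by
    filter_upwards [hBcard.eventually_ge_atTop 1] with n hn
    have hne : ((B n).card : ℝ) ≠ 0 := by
      have : 0 < (B n).card := hn
      positivity
    have hcast : (((B n).filter (fun j => j + t ∈ B n)).card : ℝ) =
        ((B n).card : ℝ) - (bad n : ℝ) := by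
      have := hsplit n
      push_cast [← this]
      ring
    rw [hcast]
    field_simp
  have := (tendsto_const_nhds (x := (1:ℝ)) (f := atTop)).sub hbad0
  rw [sub_zero] at this
  exact this.congr' hev

/-- Convergence of covariances of normalized sums over regularly growing sets for a
stationary `m`-dependent field: the covariance of
`|B_n|^{-1/2} Σ_{j∈B_n} g_n^{(1)}(X_j)` and `|B_n|^{-1/2} Σ_{k∈B_n} g_n^{(2)}(X_k)`
converges to `Σ_{‖t‖_∞ ≤ m} σ_t` with `σ_t = E[g^{(1)}(X_0) g^{(2)}(X_t)]`. -/
theorem covariance_convergence {d : ℕ} {Ω : Type*} [MeasurableSpace Ω]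
    (P : Measure Ω) [IsProbabilityMeasure P] (m : ℕ)
    (X : (Fin d → ℤ) → Ω → ℝ)
    (hmeas : ∀ j, Measurable (X j))
    (hstat : ∀ t : Fin d → ℤ,
      Measure.map (fun ω => fun j => X (j + t) ω) P =
        Measure.map (fun ω => fun j => X j ω) P)
    (hmdep : ∀ S T : Finset (Fin d → ℤ),
      (∀ s ∈ S, ∀ t ∈ T, (m : ℝ) < dist s t) →
      IndepFun (fun ω => fun s : S => X s ω) (fun ω => fun t : T => X t ω) P)
    (B : ℕ → Finset (Fin d → ℤ))
    (hBcard : Tendsto (fun n => (B n).card) atTop atTop)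
    (hBreg : Tendsto (fun n =>
        ((latticeBoundary (↑(B n) : Set (Fin d → ℤ))).ncard : ℝ) / ((B n).card : ℝ))
      atTop (nhds 0))
    (g1 g2 : ℝ → ℝ) (gn1 gn2 : ℕ → ℝ → ℝ)
    (hgmeas : Measurable g1 ∧ Measurable g2 ∧ (∀ n, Measurable (gn1 n)) ∧
      ∀ n, Measurable (gn2 n))
    (hcent : ∀ n, (∫ ω, gn1 n (X 0 ω) ∂P) = 0 ∧ (∫ ω, gn2 n (X 0 ω) ∂P) = 0)
    (hL2 : MemLp (fun ω => g1 (X 0 ω)) 2 P ∧ MemLp (fun ω => g2 (X 0 ω)) 2 P ∧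
      (∀ n, MemLp (fun ω => gn1 n (X 0 ω)) 2 P) ∧
      ∀ n, MemLp (fun ω => gn2 n (X 0 ω)) 2 P)
    (hconv : ∀ k : Fin d → ℤ,
      Tendsto (fun n => ∫ ω, gn1 n (X 0 ω) * gn2 n (X k ω) ∂P) atTop
        (nhds (∫ ω, g1 (X 0 ω) * g2 (X k ω) ∂P))) :
    Tendsto (fun n => ((B n).card : ℝ)⁻¹ *
        ∫ ω, (∑ j ∈ B n, gn1 n (X j ω)) * (∑ k ∈ B n, gn2 n (X k ω)) ∂P)
      atTop
      (nhds (∑ t ∈ Finset.Icc (fun _ => -(m : ℤ)) (fun _ => (m : ℤ)),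
        ∫ ω, g1 (X 0 ω) * g2 (X t ω) ∂P)) := by
  classical
  obtain ⟨hg1m, hg2m, hgn1m, hgn2m⟩ := hgmeas
  obtain ⟨hg1L, hg2L, hgn1L, hgn2L⟩ := hL2
  set Icc : Finset (Fin d → ℤ) :=
    Finset.Icc (fun _ => -(m : ℤ)) (fun _ => (m : ℤ)) with hIcc
  set σn : ℕ → (Fin d → ℤ) → ℝ :=
    fun n t => ∫ ω, gn1 n (X 0 ω) * gn2 n (X t ω) ∂P with hσn
  have hvan : ∀ n, ∀ u ∉ Icc, σn n u = 0 := by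
    intro n u hu
    have hd : (m : ℝ) < dist (0 : Fin d → ℤ) u := distGt (j := 0) (k := u) (by rw [sub_zero]; exact hu)
    have hi := indepPair hmdep (hgn1m n) (hgn2m n) hd
    have hmul := hi.integral_fun_mul_eq_mul_integral
      ((hgn1m n).comp (hmeas 0)).aestronglyMeasurable
      ((hgn2m n).comp (hmeas u)).aestronglyMeasurable
    have h0 : ∫ ω, gn1 n (X 0 ω) ∂P = 0 := (hcent n).1
    calc σn n u = (∫ ω, gn1 n (X 0 ω) ∂P) * ∫ ω, gn2 n (X u ω) ∂P := hmul
      _ = 0 := by rw [h0, zero_mul]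
  have hintL2 : ∀ n j, MemLp (fun ω => gn1 n (X j ω)) 2 P :=
    fun n j => memL2shift P X hmeas hstat (hgn1m n) j (hgn1L n)
  have hintL2' : ∀ n k, MemLp (fun ω => gn2 n (X k ω)) 2 P :=
    fun n k => memL2shift P X hmeas hstat (hgn2m n) k (hgn2L n)
  have hint : ∀ n j k, Integrable (fun ω => gn1 n (X j ω) * gn2 n (X k ω)) P :=
    fun n j k => integMul (hintL2 n j) (hintL2' n k)
  have key : ∀ n, (∫ ω, (∑ j ∈ B n, gn1 n (X j ω)) * (∑ k ∈ B n, gn2 n (X k ω)) ∂P)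
      = ∑ t ∈ Icc, σn n t * (((B n).filter (fun j => j + t ∈ B n)).card : ℝ) := by
    intro n
    have h1 : (∫ ω, (∑ j ∈ B n, gn1 n (X j ω)) * (∑ k ∈ B n, gn2 n (X k ω)) ∂P)
        = ∑ j ∈ B n, ∑ k ∈ B n, ∫ ω, gn1 n (X j ω) * gn2 n (X k ω) ∂P := by
      simp_rw [Finset.sum_mul_sum]
      rw [integral_finset_sum _ (fun j _ => integrable_finset_sum _ (fun k _ => hint n j k))]
      exact Finset.sum_congr rfl fun j _ =>
        integral_finset_sum _ (fun k _ => hint n j k)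
    have h2 : ∀ j k : Fin d → ℤ,
        (∫ ω, gn1 n (X j ω) * gn2 n (X k ω) ∂P) = σn n (k - j) :=
      fun j k => covShift P X hmeas hstat (hgn1m n) (hgn2m n) j k
    have h4 : ∀ j ∈ B n, (∑ k ∈ B n, σn n (k - j))
        = ∑ t ∈ Icc, if j + t ∈ B n then σn n t else 0 := by
      intro j _
      rw [← Finset.sum_filter]
      rw [← Finset.sum_filter_of_ne
        (p := fun k => k - j ∈ Icc) (s := B n) (f := fun k => σn n (k - j))
        (fun k _ hk => by by_contra hc; exact hk (hvan n _ hc))]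
      refine Finset.sum_nbij' (fun k => k - j) (fun t => j + t) ?_ ?_ ?_ ?_ ?_
      · intro k hk
        rw [Finset.mem_filter] at hk ⊢
        refine ⟨hk.2, ?_⟩
        have : j + (k - j) = k := by funext i; simp only [Pi.add_apply, Pi.sub_apply]; omega
        rw [this]; exact hk.1
      · intro t ht
        rw [Finset.mem_filter] at ht ⊢
        refine ⟨ht.2, ?_⟩
        have : j + t - j = t := by funext i; simp only [Pi.add_apply, Pi.sub_apply]; omega
        rw [this]; exact ht.1
      · intro k _; funext i; simp only [Pi.add_apply, Pi.sub_apply]; omega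
      · intro t _; funext i; simp only [Pi.add_apply, Pi.sub_apply]; omega
      · intro k _; rfl
    have h5 : (∑ j ∈ B n, ∑ t ∈ Icc, if j + t ∈ B n then σn n t else 0)
        = ∑ t ∈ Icc, σn n t * (((B n).filter (fun j => j + t ∈ B n)).card : ℝ) := by
      rw [Finset.sum_comm]
      refine Finset.sum_congr rfl fun t _ => ?_
      rw [← Finset.sum_filter, Finset.sum_const, nsmul_eq_mul, mul_comm]
    rw [h1]
    calc ∑ j ∈ B n, ∑ k ∈ B n, ∫ ω, gn1 n (X j ω) * gn2 n (X k ω) ∂P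
        = ∑ j ∈ B n, ∑ k ∈ B n, σn n (k - j) := by
          exact Finset.sum_congr rfl fun j _ => Finset.sum_congr rfl fun k _ => h2 j k
      _ = ∑ j ∈ B n, ∑ t ∈ Icc, if j + t ∈ B n then σn n t else 0 :=
          Finset.sum_congr rfl h4
      _ = _ := h5
  have heq : ∀ n, ((B n).card : ℝ)⁻¹ *
      (∫ ω, (∑ j ∈ B n, gn1 n (X j ω)) * (∑ k ∈ B n, gn2 n (X k ω)) ∂P)
      = ∑ t ∈ Icc, σn n t *
        ((((B n).filter (fun j => j + t ∈ B n)).card : ℝ) / ((B n).card : ℝ)) := by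
    intro n
    rw [key n, Finset.mul_sum]
    refine Finset.sum_congr rfl fun t _ => ?_
    rw [div_eq_mul_inv]; ring
  refine Tendsto.congr (fun n => (heq n).symm) ?_
  refine tendsto_finset_sum _ fun t ht => ?_
  have hmem : ∀ i, |t i| ≤ (m : ℤ) := by
    rw [hIcc, Finset.mem_Icc] at ht
    intro i
    rw [abs_le]
    exact ⟨ht.1 i, ht.2 i⟩
  have h2 := ratioTendsto m B hBcard hBreg t hmem
  simpa using (hconv t).mul h2
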